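/- Let d ≥ 1 be an integer and z a complex number with Im z > 0. Then the following are equivalent: (1) there exist real numbers a_0, …, a_d with a_m ≥ 0 for all m, not all zero, such that Σ_{m=0}^d a_m · C_d(z+d−m) = 0; (2) A(0,d;z) ≥ π, i.e., Σ_{m=0}^{d−1} (arg(z−m) − arg(z+d−m)) ≥ π. -/

import Mathlib

/-- The binomial coefficient polynomial `C_d(w) = (1/d!) ∏_{i=0}^{d-1} (w - i)`. -/
noncomputable def binomC (d : ℕ) (w : ℂ) : ℂ :=
  (∏ i ∈ Finset.range d, (w - i)) / (Nat.factorial d)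

/-- The angle sum `A(j,k;z) = Σ_{m=j}^{k-1} (arg(z-m) - arg(z+d-m))`. -/
noncomputable def angleSum (d j k : ℕ) (z : ℂ) : ℝ :=
  ∑ m ∈ Finset.Icc j (k - 1), (Complex.arg (z - m) - Complex.arg (z + d - m))

section ConeLemmas
open Complex Finset Real

/-- If the total turning angle is less than π, no nontrivial nonnegative
combination of the vectors `ρ m · exp(i θ m)` can vanish. -/
lemma coneB (n : ℕ) (t ρ : ℕ → ℝ) (ht0 : ∀ j, 0 < t j)
    (hρ : ∀ m, 0 < ρ m) (hsum : ∑ j ∈ Finset.range n, t j < π)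
    (a : Fin (n + 1) → ℝ) (ha : ∀ m, 0 ≤ a m) (m₀ : Fin (n + 1)) (hm₀ : a m₀ ≠ 0) :
    ∑ m : Fin (n + 1), (a m : ℂ) * ((ρ (m : ℕ) : ℂ) *
      Complex.exp ((∑ j ∈ Finset.range (m : ℕ), t j : ℝ) * Complex.I)) ≠ 0 := by
  set θ : ℕ → ℝ := fun m => ∑ j ∈ Finset.range m, t j with hθ
  have hθ0 : ∀ m, 0 ≤ θ m := fun m =>
    Finset.sum_nonneg fun j _ => (ht0 j).le
  have hθle : ∀ m, m ≤ n → θ m ≤ θ n := fun m hm =>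
    Finset.sum_le_sum_of_subset_of_nonneg (Finset.range_subset_range.2 hm)
      (fun j _ _ => (ht0 j).le)
  intro hS
  set φ := θ n / 2 with hφ
  have key : ((∑ m : Fin (n + 1), (a m : ℂ) * ((ρ (m : ℕ) : ℂ) *
      Complex.exp ((θ (m : ℕ) : ℝ) * Complex.I))) * Complex.exp ((-φ : ℝ) * Complex.I)).re
      = ∑ m : Fin (n + 1), a m * ρ (m : ℕ) * Real.cos (θ (m : ℕ) - φ) := by
    rw [Finset.sum_mul, Complex.re_sum]
    refine Finset.sum_congr rfl fun m _ => ?_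
    have h1 : (a m : ℂ) * ((ρ (m : ℕ) : ℂ) * Complex.exp ((θ (m : ℕ) : ℝ) * Complex.I)) *
        Complex.exp ((-φ : ℝ) * Complex.I)
        = ((a m * ρ (m : ℕ) : ℝ) : ℂ) * Complex.exp (((θ (m : ℕ) - φ : ℝ) : ℂ) * Complex.I) := by
      rw [show (((θ (m : ℕ) - φ : ℝ)) : ℂ) * Complex.I
          = (θ (m : ℕ) : ℝ) * Complex.I + (-φ : ℝ) * Complex.I by push_cast; ring,
        Complex.exp_add]
      push_cast
      ring
    rw [h1, Complex.re_ofReal_mul, Complex.exp_ofReal_mul_I_re]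
  have hpos : 0 < ∑ m : Fin (n + 1), a m * ρ (m : ℕ) * Real.cos (θ (m : ℕ) - φ) := by
    have hc : ∀ m : Fin (n + 1), 0 < Real.cos (θ (m : ℕ) - φ) := by
      intro m
      have h1 : θ (m : ℕ) ≤ θ n := hθle _ (Nat.lt_succ_iff.mp m.isLt)
      have h2 : 0 ≤ θ (m : ℕ) := hθ0 _
      have h3 : 0 ≤ θ n := hθ0 _
      apply Real.cos_pos_of_mem_Ioo
      constructor <;> simp only [hφ] <;> nlinarith [Real.pi_pos]
    refine Finset.sum_pos' (fun m _ => ?_) ⟨m₀, Finset.mem_univ _, ?_⟩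
    · exact mul_nonneg (mul_nonneg (ha m) (hρ _).le) (hc m).le
    · have : 0 < a m₀ := lt_of_le_of_ne (ha m₀) (Ne.symm hm₀)
      exact mul_pos (mul_pos this (hρ _)) (hc m₀)
  rw [hS, zero_mul] at key
  simp only [Complex.zero_re] at key
  rw [← key] at hpos
  exact lt_irrefl _ hpos

/-- If the total turning angle is at least π (with each step in (0,π)), a
nontrivial nonnegative vanishing combination of `ρ m · exp(i θ m)` exists. -/
lemma coneA (n : ℕ) (t ρ : ℕ → ℝ) (ht0 : ∀ j, 0 < t j) (htπ : ∀ j, t j < π)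
    (hρ : ∀ m, 0 < ρ m) (hsum : π ≤ ∑ j ∈ Finset.range n, t j) :
    ∃ a : Fin (n + 1) → ℝ, (∀ m, 0 ≤ a m) ∧ (∃ m, a m ≠ 0) ∧
      ∑ m : Fin (n + 1), (a m : ℂ) * ((ρ (m : ℕ) : ℂ) *
        Complex.exp ((∑ j ∈ Finset.range (m : ℕ), t j : ℝ) * Complex.I)) = 0 := by
  classical
  set θ : ℕ → ℝ := fun m => ∑ j ∈ Finset.range m, t j with hθdef
  have hθ0 : ∀ m, 0 ≤ θ m := fun m => Finset.sum_nonneg fun j _ => (ht0 j).le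
  have hex : ∃ k, π ≤ θ k := ⟨n, hsum⟩
  set k := Nat.find hex with hkdef
  have hk : π ≤ θ k := Nat.find_spec hex
  have hmin : ∀ j, j < k → θ j < π := fun j hj => not_le.mp (Nat.find_min hex hj)
  have hkn : k ≤ n := Nat.find_min' hex hsum
  have hk2 : 2 ≤ k := by
    by_contra h
    interval_cases k
    · have : θ 0 = 0 := by simp [hθdef]
      rw [this] at hk; exact absurd hk (not_le.mpr Real.pi_pos)
    · have : θ 1 = t 0 := by simp [hθdef]
      rw [this] at hk; exact absurd hk (not_le.mpr (htπ 0))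
  have hk1 : k - 1 + 1 = k := by omega
  have hθsucc : θ k = θ (k - 1) + t (k - 1) := by
    conv_lhs => rw [← hk1]
    rw [hθdef]
    exact Finset.sum_range_succ t (k - 1)
  have hθ1lt : θ (k - 1) < π := hmin _ (by omega)
  have hθ1pos : 0 ≤ θ (k - 1) := hθ0 _
  have hθ2lt : θ k < 2 * π := by
    rw [hθsucc]; have := htπ (k - 1); linarith
  set θ₁ := θ (k - 1) with hθ₁
  set θ₂ := θ k with hθ₂
  set γ := Real.sin (θ₂ - θ₁) with hγ
  set α := Real.sin (θ₂ - π) with hα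
  set β := Real.sin θ₁ with hβ
  have hγpos : 0 < γ := by
    apply Real.sin_pos_of_pos_of_lt_pi
    · rw [hθsucc]; have := ht0 (k - 1); linarith
    · rw [hθsucc]; have := htπ (k - 1); linarith
  have hαnn : 0 ≤ α := Real.sin_nonneg_of_nonneg_of_le_pi (by linarith) (by linarith)
  have hβnn : 0 ≤ β := Real.sin_nonneg_of_nonneg_of_le_pi hθ1pos hθ1lt.le
  -- the coefficient function
  set A : ℕ → ℝ := fun m =>
    if m = 0 then γ / ρ 0 else if m = k - 1 then α / ρ (k - 1)
      else if m = k then β / ρ k else 0 with hA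
  refine ⟨fun m => A (m : ℕ), fun m => ?_, ⟨⟨0, Nat.succ_pos n⟩, ?_⟩, ?_⟩
  · show 0 ≤ A (m : ℕ)
    simp only [hA]
    split_ifs <;>
      first
        | exact div_nonneg hγpos.le (hρ _).le
        | exact div_nonneg hαnn (hρ _).le
        | exact div_nonneg hβnn (hρ _).le
        | exact le_refl 0
  · show A ((⟨0, Nat.succ_pos n⟩ : Fin (n + 1)) : ℕ) ≠ 0
    have : ((⟨0, Nat.succ_pos n⟩ : Fin (n + 1)) : ℕ) = 0 := rfl
    rw [this]
    simp only [hA, if_pos rfl]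
    exact ne_of_gt (div_pos hγpos (hρ 0))
  · -- the sum vanishes
    have hrw : ∑ m : Fin (n + 1), (A (m : ℕ) : ℂ) * ((ρ (m : ℕ) : ℂ) *
        Complex.exp ((∑ j ∈ Finset.range (m : ℕ), t j : ℝ) * Complex.I))
        = ∑ m ∈ Finset.range (n + 1), (A m : ℂ) * ((ρ m : ℂ) *
          Complex.exp ((θ m : ℝ) * Complex.I)) :=
      Fin.sum_univ_eq_sum_range
        (fun m => (A m : ℂ) * ((ρ m : ℂ) * Complex.exp ((θ m : ℝ) * Complex.I))) (n + 1)
    rw [hrw]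
    have hne01 : (0 : ℕ) ≠ k - 1 := by omega
    have hne02 : (0 : ℕ) ≠ k := by omega
    have hne12 : k - 1 ≠ k := by omega
    have hsub : ({0, k - 1, k} : Finset ℕ) ⊆ Finset.range (n + 1) := by
      intro x hx
      simp only [Finset.mem_insert, Finset.mem_singleton] at hx
      rcases hx with rfl | rfl | rfl <;> simp [Nat.lt_succ_iff] <;> omega
    rw [← Finset.sum_subset hsub (fun x _ hx => ?_)]
    swap
    · simp only [Finset.mem_insert, Finset.mem_singleton, not_or] at hx
      obtain ⟨h1, h2, h3⟩ := hx
      simp [hA, h1, h2, h3]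
    rw [Finset.sum_insert (by simp [hne01, hne02]),
      Finset.sum_insert (by simp [hne12]), Finset.sum_singleton]
    have e0 : (A 0 : ℂ) * ((ρ 0 : ℂ) * Complex.exp ((θ 0 : ℝ) * Complex.I)) = (γ : ℂ) := by
      have h0 : θ 0 = 0 := by simp [hθdef]
      have hA0 : A 0 = γ / ρ 0 := by simp [hA]
      rw [h0, hA0]
      simp only [Complex.ofReal_zero, zero_mul, Complex.exp_zero, mul_one]
      rw [← Complex.ofReal_mul, div_mul_cancel₀ _ (ne_of_gt (hρ 0))]
    have e1 : (A (k - 1) : ℂ) * ((ρ (k - 1) : ℂ) * Complex.exp ((θ₁ : ℝ) * Complex.I))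
        = (α : ℂ) * Complex.exp ((θ₁ : ℝ) * Complex.I) := by
      have hA1 : A (k - 1) = α / ρ (k - 1) := by simp [hA, hne01.symm]
      rw [hA1, ← mul_assoc, ← Complex.ofReal_mul, div_mul_cancel₀ _ (ne_of_gt (hρ _))]
    have e2 : (A k : ℂ) * ((ρ k : ℂ) * Complex.exp ((θ₂ : ℝ) * Complex.I))
        = (β : ℂ) * Complex.exp ((θ₂ : ℝ) * Complex.I) := by
      have hA2 : A k = β / ρ k := by simp [hA, hne02.symm, Ne.symm hne12]
      rw [hA2, ← mul_assoc, ← Complex.ofReal_mul, div_mul_cancel₀ _ (ne_of_gt (hρ _))]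
    rw [e0, e1, e2]
    -- final trig identity
    apply Complex.ext
    · simp only [Complex.add_re, Complex.ofReal_re, Complex.re_ofReal_mul,
        Complex.exp_ofReal_mul_I_re, hγ, hα, hβ]
      rw [Real.sin_sub, Real.sin_sub]
      simp [Real.cos_pi, Real.sin_pi]
      ring
    · simp only [Complex.add_im, Complex.ofReal_im, Complex.im_ofReal_mul,
        Complex.exp_ofReal_mul_I_im, hγ, hα, hβ]
      rw [Real.sin_sub]
      simp [Real.cos_pi, Real.sin_pi]
      ring

end ConeLemmas

/-- Theorem 4.10 (non-real roots): a point `z` in the upper half-plane is a root of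
some nonzero polynomial with nonnegative coefficients in the binomial coefficient
basis iff `A(0,d;z) ≥ π`. -/
theorem stmt_16 (d : ℕ) (hd : 1 ≤ d) (z : ℂ) (hz : 0 < z.im) :
    (∃ a : Fin (d + 1) → ℝ, (∀ m, 0 ≤ a m) ∧ (∃ m, a m ≠ 0) ∧
        ∑ m, (a m : ℂ) * binomC d (z + d - (m : ℕ)) = 0)
      ↔ Real.pi ≤ angleSum d 0 d z := by
  have hy : 0 < z.im := hz
  have hdpos : (0 : ℝ) < d := by exact_mod_cast hd
  have him0 : ∀ w : ℂ, w.im = z.im → w ≠ 0 := by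
    intro w hw h
    rw [h, Complex.zero_im] at hw
    exact (ne_of_gt hy) hw.symm
  have hnum_im : ∀ m : ℕ, (z - (m : ℂ)).im = z.im := by intro m; simp
  have hden_im : ∀ m : ℕ, (z + (d : ℂ) - (m : ℂ)).im = z.im := by intro m; simp
  have hnum0 : ∀ m : ℕ, z - (m : ℂ) ≠ 0 := fun m => him0 _ (hnum_im m)
  have hden0 : ∀ m : ℕ, z + (d : ℂ) - (m : ℂ) ≠ 0 := fun m => him0 _ (hden_im m)
  have hargpos : ∀ w : ℂ, 0 < w.im → 0 < w.arg := by
    intro w hw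
    refine lt_of_le_of_ne (Complex.arg_nonneg_iff.mpr hw.le) fun h => ?_
    exact (ne_of_gt hw) (Complex.arg_eq_zero_iff.mp h.symm).2
  have harglt : ∀ w : ℂ, 0 < w.im → w.arg < Real.pi := fun w hw =>
    Complex.arg_lt_pi_iff.mpr (Or.inr (ne_of_gt hw))
  set q : ℕ → ℂ := fun m => (z - m) / (z + d - m) with hqdef
  set t : ℕ → ℝ := fun m => (z - m).arg - (z + d - m).arg with htdef
  set ρ : ℕ → ℝ := fun m => ∏ j ∈ Finset.range m, ‖q j‖ with hρdef
  have hqim : ∀ m : ℕ, 0 < (q m).im := by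
    intro m
    have hns : 0 < Complex.normSq (z + d - m) := Complex.normSq_pos.mpr (hden0 m)
    have hval : (q m).im = z.im * d / Complex.normSq (z + d - m) := by
      simp only [hqdef]
      rw [Complex.div_im, div_sub_div_same]
      congr 1
      simp only [Complex.sub_re, Complex.sub_im, Complex.add_re, Complex.add_im,
        Complex.natCast_re, Complex.natCast_im]
      ring
    rw [hval]
    exact div_pos (mul_pos hy hdpos) hns
  have hq0 : ∀ m : ℕ, q m ≠ 0 := by
    intro m h
    simpa [h] using hqim m
  have htq : ∀ m : ℕ, t m = (q m).arg := by
    intro m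
    have h1 : (((q m).arg : Real.Angle)) =
        (((z - m).arg : ℝ) - ((z + d - m).arg : ℝ) : ℝ) := by
      rw [Real.Angle.coe_sub]
      exact Complex.arg_div_coe_angle (hnum0 m) (hden0 m)
    have h2 : (q m).arg ∈ Set.Ioc (-Real.pi) Real.pi :=
      ⟨Complex.neg_pi_lt_arg _, Complex.arg_le_pi _⟩
    have a1 : 0 < (z - (m : ℂ)).arg := hargpos _ (by rw [hnum_im m]; exact hy)
    have a2 : (z - (m : ℂ)).arg < Real.pi := harglt _ (by rw [hnum_im m]; exact hy)
    have b1 : 0 < (z + (d : ℂ) - (m : ℂ)).arg := hargpos _ (by rw [hden_im m]; exact hy)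
    have b2 : (z + (d : ℂ) - (m : ℂ)).arg < Real.pi := harglt _ (by rw [hden_im m]; exact hy)
    have h3 : ((z - (m : ℂ)).arg - (z + (d : ℂ) - (m : ℂ)).arg) ∈ Set.Ioc (-Real.pi) Real.pi :=
      ⟨by linarith, by linarith⟩
    have h4 := congrArg Real.Angle.toReal h1
    rw [Real.Angle.toReal_coe_eq_self_iff_mem_Ioc.mpr h2,
      Real.Angle.toReal_coe_eq_self_iff_mem_Ioc.mpr h3] at h4
    simp only [htdef]
    exact h4.symm
  have ht_pos : ∀ m : ℕ, 0 < t m := fun m => by rw [htq m]; exact hargpos _ (hqim m)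
  have ht_lt : ∀ m : ℕ, t m < Real.pi := fun m => by rw [htq m]; exact harglt _ (hqim m)
  have hρpos : ∀ m : ℕ, 0 < ρ m := by
    intro m
    simp only [hρdef]
    exact Finset.prod_pos fun j _ => norm_pos_iff.mpr (hq0 j)
  have hfac : ((Nat.factorial d : ℂ)) ≠ 0 := Nat.cast_ne_zero.mpr (Nat.factorial_ne_zero d)
  have htele : ∀ m : ℕ, binomC d (z + d - ((m + 1 : ℕ) : ℂ)) = binomC d (z + d - (m : ℂ)) * q m := by
    intro m
    have h1 : ∏ i ∈ Finset.range d, (z + (d : ℂ) - ((m + 1 : ℕ) : ℂ) - (i : ℂ))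
        = ∏ i ∈ Finset.range d, (z + (d : ℂ) - (m : ℂ) - ((i : ℂ) + 1)) :=
      Finset.prod_congr rfl fun i _ => by push_cast; ring
    have h4 := (Finset.prod_range_succ' (fun i : ℕ => z + (d : ℂ) - (m : ℂ) - (i : ℂ)) d).symm.trans
      (Finset.prod_range_succ (fun i : ℕ => z + (d : ℂ) - (m : ℂ) - (i : ℂ)) d)
    push_cast at h4
    have key : (∏ i ∈ Finset.range d, (z + (d : ℂ) - ((m + 1 : ℕ) : ℂ) - (i : ℂ))) * (z + (d : ℂ) - (m : ℂ))
        = (∏ i ∈ Finset.range d, (z + (d : ℂ) - (m : ℂ) - (i : ℂ))) * (z - (m : ℂ)) := by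
      rw [h1]
      linear_combination h4
    simp only [binomC, hqdef]
    rw [div_mul_div_comm, div_eq_div_iff hfac (mul_ne_zero hfac (hden0 m))]
    linear_combination ((Nat.factorial d : ℂ)) * key
  have hprod : ∀ m : ℕ, binomC d (z + d - (m : ℂ)) = binomC d (z + d) * ∏ j ∈ Finset.range m, q j := by
    intro m
    induction m with
    | zero => simp
    | succ m ih =>
      rw [htele m, ih, Finset.prod_range_succ]
      ring
  have hexp : ∀ m : ℕ, (∏ j ∈ Finset.range m, q j)
      = (ρ m : ℂ) * Complex.exp ((∑ j ∈ Finset.range m, t j : ℝ) * Complex.I) := by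
    intro m
    calc ∏ j ∈ Finset.range m, q j
        = ∏ j ∈ Finset.range m, ((‖q j‖ : ℂ) * Complex.exp (((q j).arg : ℝ) * Complex.I)) :=
          Finset.prod_congr rfl fun j _ => (Complex.norm_mul_exp_arg_mul_I (q j)).symm
      _ = (∏ j ∈ Finset.range m, (‖q j‖ : ℂ)) *
          ∏ j ∈ Finset.range m, Complex.exp (((q j).arg : ℝ) * Complex.I) := Finset.prod_mul_distrib
      _ = (ρ m : ℂ) * Complex.exp ((∑ j ∈ Finset.range m, t j : ℝ) * Complex.I) := by
          rw [hρdef, Complex.ofReal_prod, ← Complex.exp_sum]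
          congr 1
          rw [Complex.ofReal_sum, Finset.sum_mul]
          exact congrArg Complex.exp
            (Finset.sum_congr rfl fun j _ => by rw [htq j]).symm
  have hB0 : binomC d (z + d) ≠ 0 := by
    rw [binomC]
    apply div_ne_zero _ hfac
    exact Finset.prod_ne_zero_iff.mpr fun i _ => him0 _ (by simp)
  have hangle : angleSum d 0 d z = ∑ j ∈ Finset.range d, t j := by
    rw [angleSum]
    have hIcc : Finset.Icc 0 (d - 1) = Finset.range d := by
      rw [← Finset.Ico_add_one_right_eq_Icc, Nat.sub_add_cancel hd, ← Finset.range_eq_Ico]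
    rw [hIcc]
  have hsum_rw : ∀ a : Fin (d + 1) → ℝ,
      ∑ m : Fin (d + 1), (a m : ℂ) * binomC d (z + d - ((m : ℕ) : ℂ))
      = binomC d (z + d) * ∑ m : Fin (d + 1), (a m : ℂ) * ((ρ (m : ℕ) : ℂ) *
          Complex.exp ((∑ j ∈ Finset.range (m : ℕ), t j : ℝ) * Complex.I)) := by
    intro a
    rw [Finset.mul_sum]
    refine Finset.sum_congr rfl fun m _ => ?_
    rw [hprod (m : ℕ), hexp (m : ℕ)]
    ring
  constructor
  · rintro ⟨a, ha, ⟨m₀, hm₀⟩, hzero⟩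
    by_contra hlt
    push_neg at hlt
    rw [hangle] at hlt
    rw [hsum_rw a] at hzero
    rcases mul_eq_zero.mp hzero with h | h
    · exact hB0 h
    · exact coneB d t ρ ht_pos hρpos hlt a ha m₀ hm₀ h
  · intro hge
    rw [hangle] at hge
    obtain ⟨a, ha, hne, hzero⟩ := coneA d t ρ ht_pos ht_lt hρpos hge
    exact ⟨a, ha, hne, by rw [hsum_rw a, hzero, mul_zero]⟩
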